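/- Let Q = Q_k be the linear quiver of type A_n with all arrows i ← i+1, and let D : ℤR^+ → ℤ^N be the linear function associated to the directed partition of the positive roots determined by another quiver Q' of type A_n via slices. Then D is invertible, and each component c_α of E(a) = D^{-1}(a) is of the form a_k − a_l or a_k for suitable indices k, l. -/
import Mathlib


attribute [local instance] Classical.propDecidable

private lemma sum_tail {n : ℕ} (f : Fin n → ℤ) (m : Fin n) (h : m.val + 1 < n) :
    (∑ v ∈ Finset.univ.filter (fun v => m ≤ v), f v) =
      f m + ∑ v ∈ Finset.univ.filter (fun v => (⟨m.val + 1, h⟩ : Fin n) ≤ v), f v := by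
  have hset : Finset.univ.filter (fun v : Fin n => m ≤ v) =
      insert m (Finset.univ.filter (fun v => (⟨m.val + 1, h⟩ : Fin n) ≤ v)) := by
    ext v
    simp only [Finset.mem_filter, Finset.mem_univ, true_and, Finset.mem_insert, Fin.le_def]
    constructor
    · intro hv
      rcases Nat.eq_or_lt_of_le hv with h1 | h1
      · left; exact Fin.ext h1.symm
      · right; exact h1
    · rintro (rfl | hv)
      · exact le_rfl
      · simp at hv ⊢; omega
  rw [hset, Finset.sum_insert]
  simp only [Finset.mem_filter, Finset.mem_univ, true_and, Fin.le_def]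
  omega

private lemma sum_last {n : ℕ} (f : Fin n → ℤ) (m : Fin n) (h : m.val + 1 = n) :
    (∑ v ∈ Finset.univ.filter (fun v => m ≤ v), f v) = f m := by
  have hset : Finset.univ.filter (fun v : Fin n => m ≤ v) = {m} := by
    ext v
    simp only [Finset.mem_filter, Finset.mem_univ, true_and, Finset.mem_singleton, Fin.le_def]
    constructor
    · intro hv; exact Fin.ext (by have := v.isLt; omega)
    · rintro rfl; exact le_rfl
  rw [hset, Finset.sum_singleton]

private lemma tele {n : ℕ} (A : Fin n → ℤ) (f : Fin n → ℤ)
    (hf : ∀ v : Fin n, f v = if h : v.val + 1 < n then A v - A ⟨v.val + 1, h⟩ else A v)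
    (m : Fin n) :
    ∑ v ∈ Finset.univ.filter (fun v => m ≤ v), f v = A m := by
  have key : ∀ k (m : Fin n), n - m.val ≤ k →
      ∑ v ∈ Finset.univ.filter (fun v => m ≤ v), f v = A m := by
    intro k
    induction k with
    | zero => intro m hm; exact absurd hm (by have := m.isLt; omega)
    | succ k ih =>
      intro m hm
      by_cases h : m.val + 1 < n
      · rw [sum_tail f m h, hf, dif_pos h, ih ⟨m.val + 1, h⟩ (by simp; omega)]
        ring
      · have h1 : m.val + 1 = n := by have := m.isLt; omega
        rw [sum_last f m h1, hf, dif_neg h]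
  exact key n m (by omega)

/-- (Lemma 4.5) Invertibility of the linear map `D` associated to the directed slice
partition of the positive roots of type `A_n` determined by a quiver `Q'`.

Each part `I_p` (of size `t p`) consists of nested roots `α^p_u = α_{J 1} + ... + α_{J u}`,
encoded by the injective function `J p : Fin (t p) → ℕ` listing the simple roots added one
at a time; `σ p` is the permutation sorting the support, so that `i^p_u = J p (σ p u)` is
the `u`-th smallest letter of the support.  The map `D` sends `c = (c_α)` to `a = (a_j)`
with `a^p_u = Σ_{α ∈ I_p, i^p_u ∈ α} c_α` (membership of the letter `i^p_u` in the support
`{J p w : w ≤ v}` of `α^p_v`).  Then `D` is invertible and each component of the inverse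
`E = D⁻¹` is of the form `a_k - a_l` or `a_k`. -/
theorem D_invertible
    (s : ℕ) (t : Fin s → ℕ) (ht : ∀ p, 1 ≤ t p)
    (J : ∀ p, Fin (t p) → ℕ) (hJ : ∀ p, Function.Injective (J p))
    (σ : ∀ p, Equiv.Perm (Fin (t p)))
    (hσ : ∀ p, StrictMono (fun u => J p (σ p u)))
    (D : (∀ p, Fin (t p) → ℤ) → (∀ p, Fin (t p) → ℤ))
    (hD : ∀ c p u, D c p u =
      ∑ v ∈ Finset.univ.filter (fun v => ∃ w, w ≤ v ∧ J p w = J p (σ p u)), c p v) :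
    Function.Bijective D ∧
      ∃ E : (∀ p, Fin (t p) → ℤ) → (∀ p, Fin (t p) → ℤ),
        Function.LeftInverse E D ∧ Function.RightInverse E D ∧
        ∀ p u, (∃ k l, ∀ a, E a p u = a p k - a p l) ∨ (∃ k, ∀ a, E a p u = a p k) := by
  -- Simplify the defining formula of `D`.
  have hD' : ∀ c p u, D c p u =
      ∑ v ∈ Finset.univ.filter (fun v => σ p u ≤ v), c p v := by
    intro c p u
    rw [hD]
    congr 1
    ext v
    simp only [Finset.mem_filter, Finset.mem_univ, true_and]
    constructor
    · rintro ⟨w, hw, hJw⟩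
      rwa [hJ p hJw] at hw
    · intro hv; exact ⟨σ p u, hv, rfl⟩
  -- Define the inverse.
  set E : (∀ p, Fin (t p) → ℤ) → (∀ p, Fin (t p) → ℤ) :=
    fun a p v => if h : v.val + 1 < t p then
        a p ((σ p).symm v) - a p ((σ p).symm ⟨v.val + 1, h⟩)
      else a p ((σ p).symm v) with hE
  have hleft : Function.LeftInverse E D := by
    intro c
    funext p v
    simp only [hE]
    by_cases h : v.val + 1 < t p
    · rw [dif_pos h, hD', hD', Equiv.apply_symm_apply, Equiv.apply_symm_apply,
        sum_tail (c p) v h]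
      ring
    · have h1 : v.val + 1 = t p := by have := v.isLt; omega
      rw [dif_neg h, hD', Equiv.apply_symm_apply, sum_last (c p) v h1]
  have hright : Function.RightInverse E D := by
    intro a
    funext p u
    rw [hD']
    have := tele (fun v => a p ((σ p).symm v)) (fun v => E a p v) (fun v => rfl) (σ p u)
    rw [this, Equiv.symm_apply_apply]
  refine ⟨Function.bijective_iff_has_inverse.mpr ⟨E, hleft, hright⟩, E, hleft, hright, ?_⟩
  intro p u
  by_cases h : u.val + 1 < t p
  · left
    exact ⟨(σ p).symm u, (σ p).symm ⟨u.val + 1, h⟩, fun a => by simp [hE, dif_pos h]⟩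
  · right
    exact ⟨(σ p).symm u, fun a => by simp [hE, dif_neg h]⟩
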